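/- For f(w) = w^p with 0 < p < 1 and any δ > 0, letting λ̂ = (f')⁻¹(g₁) where g₁ is the derivative at 0 of the δ-smoothing g of f, the shift smoothing h(w) = (w + λ̂)^p − λ̂^p satisfies h(w) ≤ g(w) for all w ≥ 0. -/

import Mathlib

open Set

lemma aux_subadd {a b p : ℝ} (ha : 0 ≤ a) (hb : 0 ≤ b) (hp0 : 0 ≤ p) (hp1 : p ≤ 1) :
    (a + b) ^ p ≤ a ^ p + b ^ p := by
  have h := NNReal.rpow_add_le_add_rpow a.toNNReal b.toNNReal hp0 hp1
  have h2 := NNReal.coe_le_coe.2 h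
  simpa [NNReal.coe_rpow, ← Real.toNNReal_add ha hb,
    Real.coe_toNNReal _ (by linarith : (0:ℝ) ≤ a + b),
    Real.coe_toNNReal _ ha, Real.coe_toNNReal _ hb] using h2

lemma aux_conv {q x y a b : ℝ} (hq : q ≤ 0) (hx : 0 < x) (hy : 0 < y)
    (ha : 0 ≤ a) (hb : 0 ≤ b) (hab : a + b = 1) :
    (a * x + b * y) ^ q ≤ a * x ^ q + b * y ^ q := by
  have hz : 0 < a * x + b * y := by
    rcases lt_or_eq_of_le ha with h | h
    · nlinarith [mul_nonneg hb hy.le]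
    · nlinarith [mul_pos (show 0 < b by linarith) hy]
  have hcc : a * Real.log x + b * Real.log y ≤ Real.log (a * x + b * y) := by
    have := (strictConcaveOn_log_Ioi.concaveOn).2 (Set.mem_Ioi.2 hx) (Set.mem_Ioi.2 hy) ha hb hab
    simpa [smul_eq_mul] using this
  have hlog : Real.log (a * x + b * y) * q ≤ a * (Real.log x * q) + b * (Real.log y * q) := by
    nlinarith [mul_le_mul_of_nonpos_left hcc hq]
  rw [Real.rpow_def_of_pos hz, Real.rpow_def_of_pos hx, Real.rpow_def_of_pos hy]
  calc Real.exp (Real.log (a * x + b * y) * q)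
      ≤ Real.exp (a * (Real.log x * q) + b * (Real.log y * q)) := Real.exp_le_exp.2 hlog
    _ ≤ a * Real.exp (Real.log x * q) + b * Real.exp (Real.log y * q) := by
        have := convexOn_exp.2 (Set.mem_univ (Real.log x * q)) (Set.mem_univ (Real.log y * q)) ha hb hab
        simpa [smul_eq_mul] using this

set_option maxHeartbeats 1000000

lemma core_lemma (p δ lam g1 A B : ℝ) (hp0 : 0 < p) (hp1 : p < 1) (hδ : 0 < δ)
    (hlam : 0 < lam)
    (h0 : p * lam ^ (p - 1) = g1)
    (hgd : g1 + 2 * A * δ + 3 * B * δ ^ 2 = p * δ ^ (p - 1))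
    (hpd : 2 * A + 6 * B * δ = p * ((p - 1) * δ ^ (p - 2))) :
    ∀ w ∈ Set.Icc 0 δ, (w + lam) ^ p - lam ^ p ≤ g1 * w + A * w ^ 2 + B * w ^ 3 := by
  intro w hwmem
  obtain ⟨hw0, hwδ⟩ := hwmem
  have hplam : ∀ x : ℝ, 0 ≤ x → (0:ℝ) < x + lam := fun x hx => by linarith
  -- derivative of (· + lam) ^ r
  have hpow : ∀ (r x : ℝ), 0 ≤ x →
      HasDerivAt (fun t : ℝ => (t + lam) ^ r) (r * (x + lam) ^ (r - 1)) x := by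
    intro r x hx
    have h1 := Real.hasDerivAt_rpow_const (x := x + lam) (p := r) (Or.inl (hplam x hx).ne')
    have h2 := HasDerivAt.comp x h1 ((hasDerivAt_id x).add_const lam)
    exact h2.congr_deriv (mul_one _)
  -- derivative of D
  have hDd : ∀ x : ℝ, 0 ≤ x →
      HasDerivAt (fun t : ℝ => g1 * t + A * t ^ 2 + B * t ^ 3 - ((t + lam) ^ p - lam ^ p))
        (g1 + 2 * A * x + 3 * B * x ^ 2 - p * (x + lam) ^ (p - 1)) x := by
    intro x hx
    have hP : HasDerivAt (fun t : ℝ => g1 * t + A * t ^ 2 + B * t ^ 3)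
        (g1 + 2 * A * x + 3 * B * x ^ 2) x := by
      have h := (((hasDerivAt_id x).const_mul g1).add ((hasDerivAt_pow 2 x).const_mul A)).add
        ((hasDerivAt_pow 3 x).const_mul B)
      refine h.congr_deriv ?_
      push_cast; ring
    exact hP.sub ((hpow p x hx).sub_const (lam ^ p))
  -- derivative of φ
  have hφd : ∀ x : ℝ, 0 ≤ x →
      HasDerivAt (fun t : ℝ => g1 + 2 * A * t + 3 * B * t ^ 2 - p * (t + lam) ^ (p - 1))
        (2 * A + 6 * B * x - p * ((p - 1) * (x + lam) ^ (p - 2))) x := by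
    intro x hx
    have hr := (hpow (p - 1) x hx).const_mul p
    rw [show p - 1 - 1 = p - 2 by ring] at hr
    have hP : HasDerivAt (fun t : ℝ => g1 + 2 * A * t + 3 * B * t ^ 2)
        (2 * A + 6 * B * x) x := by
      have h := ((hasDerivAt_const x g1).add ((hasDerivAt_id x).const_mul (2 * A))).add
        ((hasDerivAt_pow 2 x).const_mul (3 * B))
      refine h.congr_deriv ?_
      push_cast; ring
    exact hP.sub hr
  -- φ at 0
  have hφ0 : g1 + 2 * A * 0 + 3 * B * 0 ^ 2 - p * (0 + lam) ^ (p - 1) = 0 := by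
    rw [zero_add]; nlinarith [h0]
  -- φ at δ
  have hφδ : 0 ≤ g1 + 2 * A * δ + 3 * B * δ ^ 2 - p * (δ + lam) ^ (p - 1) := by
    have hm := Real.rpow_le_rpow_of_nonpos hδ (by linarith : δ ≤ δ + lam)
      (by linarith : p - 1 ≤ 0)
    nlinarith [mul_le_mul_of_nonneg_left hm hp0.le]
  -- ψ at δ
  have hψδ : 2 * A + 6 * B * δ - p * ((p - 1) * (δ + lam) ^ (p - 2)) ≤ 0 := by
    have hm := Real.rpow_le_rpow_of_nonpos hδ (by linarith : δ ≤ δ + lam)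
      (by linarith : p - 2 ≤ 0)
    have hneg : p * (p - 1) ≤ 0 := by nlinarith
    nlinarith [mul_le_mul_of_nonpos_left hm hneg]
  -- convexity: once ψ is negative it stays nonpositive up to δ
  have hψconv : ∀ x y : ℝ, 0 ≤ x → x ≤ y → y ≤ δ →
      2 * A + 6 * B * x - p * ((p - 1) * (x + lam) ^ (p - 2)) < 0 →
      2 * A + 6 * B * y - p * ((p - 1) * (y + lam) ^ (p - 2)) ≤ 0 := by
    intro x y hx hxy hyδ hψx
    rcases eq_or_lt_of_le (hxy.trans hyδ) with hxδ | hxδ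
    · have hyx : y = x := le_antisymm (hxδ ▸ hyδ) hxy
      rw [hyx]; linarith
    · have hdx : 0 < δ - x := by linarith
      set a := (δ - y) / (δ - x) with ha_def
      set b := (y - x) / (δ - x) with hb_def
      have ha : 0 ≤ a := div_nonneg (by linarith) hdx.le
      have hb : 0 ≤ b := div_nonneg (by linarith) hdx.le
      have hab : a + b = 1 := by rw [ha_def, hb_def]; field_simp; ring
      have hyc : y = a * x + b * δ := by rw [ha_def, hb_def]; field_simp; ring
      have hy' : y + lam = a * (x + lam) + b * (δ + lam) := by
        rw [hyc]; nlinarith [hab]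
      have hcv := aux_conv (show p - 2 ≤ 0 by linarith) (hplam x hx) (hplam δ hδ.le) ha hb hab
      rw [← hy'] at hcv
      have hμ : 0 ≤ p * (1 - p) := by nlinarith
      have h1 : p * (1 - p) * ((y + lam) ^ (p - 2)) ≤
          p * (1 - p) * (a * (x + lam) ^ (p - 2) + b * (δ + lam) ^ (p - 2)) :=
        mul_le_mul_of_nonneg_left hcv hμ
      have e : a * (2 * A + 6 * B * x - p * ((p - 1) * (x + lam) ^ (p - 2)))
          + b * (2 * A + 6 * B * δ - p * ((p - 1) * (δ + lam) ^ (p - 2)))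
          = (2 * A + 6 * B * y) + p * (1 - p) * (a * (x + lam) ^ (p - 2) + b * (δ + lam) ^ (p - 2)) := by
        rw [hyc]; linear_combination (2 * A) * hab
      have t1 : a * (2 * A + 6 * B * x - p * ((p - 1) * (x + lam) ^ (p - 2))) ≤ 0 := by
        have := mul_le_mul_of_nonneg_left hψx.le ha
        simpa using this
      have t2 : b * (2 * A + 6 * B * δ - p * ((p - 1) * (δ + lam) ^ (p - 2))) ≤ 0 := by
        have := mul_le_mul_of_nonneg_left hψδ hb
        simpa using this
      linarith [h1, e, t1, t2]
  -- φ nonneg on [0, δ]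
  have hφnn : ∀ v ∈ Set.Icc (0:ℝ) δ,
      0 ≤ g1 + 2 * A * v + 3 * B * v ^ 2 - p * (v + lam) ^ (p - 1) := by
    intro v hv
    obtain ⟨hv0, hvδ⟩ := hv
    by_cases hcase : ∀ x ∈ Set.Icc (0:ℝ) v,
        0 ≤ 2 * A + 6 * B * x - p * ((p - 1) * (x + lam) ^ (p - 2))
    · have hmono := monotoneOn_of_deriv_nonneg (convex_Icc (0:ℝ) v)
        (fun x hx => (hφd x hx.1).continuousAt.continuousWithinAt)
        (fun x hx => by
          rw [interior_Icc] at hx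
          exact (hφd x hx.1.le).differentiableAt.differentiableWithinAt)
        (fun x hx => by
          rw [interior_Icc] at hx
          rw [(hφd x hx.1.le).deriv]
          exact hcase x ⟨hx.1.le, hx.2.le⟩)
      have := hmono ⟨le_refl 0, hv0⟩ ⟨hv0, le_refl v⟩ hv0
      simp only at this
      linarith [hφ0, this]
    · push_neg at hcase
      obtain ⟨x, hxmem, hψx⟩ := hcase
      have hanti := antitoneOn_of_deriv_nonpos (convex_Icc v δ)
        (fun z hz => (hφd z (hv0.trans hz.1)).continuousAt.continuousWithinAt)
        (fun z hz => by
          rw [interior_Icc] at hz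
          exact (hφd z (hv0.trans hz.1.le)).differentiableAt.differentiableWithinAt)
        (fun z hz => by
          rw [interior_Icc] at hz
          rw [(hφd z (hv0.trans hz.1.le)).deriv]
          exact hψconv x z hxmem.1 (hxmem.2.trans hz.1.le) hz.2.le hψx)
      have := hanti ⟨le_refl v, hvδ⟩ ⟨hvδ, le_refl δ⟩ hvδ
      simp only at this
      linarith [hφδ, this]
  -- D monotone on [0, δ]
  have hmonoD := monotoneOn_of_deriv_nonneg (convex_Icc (0:ℝ) δ)
    (fun x hx => (hDd x hx.1).continuousAt.continuousWithinAt)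
    (fun x hx => by
      rw [interior_Icc] at hx
      exact (hDd x hx.1.le).differentiableAt.differentiableWithinAt)
    (fun x hx => by
      rw [interior_Icc] at hx
      rw [(hDd x hx.1.le).deriv]
      exact hφnn x ⟨hx.1.le, hx.2.le⟩)
  have hfin := hmonoD ⟨le_refl 0, hδ.le⟩ ⟨hw0, hwδ⟩ hw0
  simp only [zero_add] at hfin
  linarith [hfin]

theorem stmt_19 (p δ : ℝ) (hp0 : 0 < p) (hp1 : p < 1) (hδ : 0 < δ)
    (f : ℝ → ℝ) (hf : f = fun w => w ^ p)
    (g1 : ℝ) (hg1 : g1 = 3 * f δ / δ - 2 * deriv f δ + δ * deriv (deriv f) δ / 2)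
    (g : ℝ → ℝ)
    (hg : g = fun w =>
      if w ≤ δ then
        g1 * w +
        (-6 * f δ / δ ^ 2 + 6 * deriv f δ / δ - 2 * deriv (deriv f) δ) / 2 * w ^ 2 +
        (6 * f δ / δ ^ 3 - 6 * deriv f δ / δ ^ 2 + 3 * deriv (deriv f) δ / δ) / 6 * w ^ 3
      else f w)
    (lam : ℝ) (hlam : lam = (g1 / p) ^ (1 / (p - 1))) :
    ∀ w : ℝ, 0 ≤ w → (w + lam) ^ p - lam ^ p ≤ g w := by
  have hfδ : f δ = δ ^ p := by rw [hf]
  have hd1 : deriv f δ = p * δ ^ (p - 1) := by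
    rw [hf]; exact Real.deriv_rpow_const δ p
  have hev : deriv f =ᶠ[nhds δ] fun x => p * x ^ (p - 1) := by
    filter_upwards [eventually_ne_nhds hδ.ne'] with x hx
    rw [hf]; exact Real.deriv_rpow_const x p
  have hd2 : deriv (deriv f) δ = p * ((p - 1) * δ ^ (p - 2)) := by
    rw [hev.deriv_eq]
    have h := ((Real.hasDerivAt_rpow_const (x := δ) (p := p - 1) (Or.inl hδ.ne')).const_mul p).deriv
    rw [show p - 1 - 1 = p - 2 by ring] at h
    exact h
  have e1 : δ ^ p = δ ^ (p - 2) * δ ^ 2 := by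
    rw [show (δ:ℝ) ^ 2 = δ ^ (2:ℝ) by rw [← Real.rpow_natCast δ 2]; norm_num,
      ← Real.rpow_add hδ]
    congr 1; ring
  have e2 : δ ^ (p - 1) = δ ^ (p - 2) * δ := by
    rw [show p - 1 = (p - 2) + 1 by ring, Real.rpow_add hδ, Real.rpow_one]
  have hEpos : 0 < δ ^ (p - 2) := Real.rpow_pos_of_pos hδ _
  have hg1v : g1 = δ ^ (p - 2) * δ * ((p ^ 2 - 5 * p + 6) / 2) := by
    rw [hg1, hfδ, hd1, hd2, e1, e2]
    field_simp
    ring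
  have hg1pos : 0 < g1 := by
    rw [hg1v]
    apply mul_pos (mul_pos hEpos hδ)
    nlinarith
  have hlam0 : 0 < lam := by
    rw [hlam]; exact Real.rpow_pos_of_pos (div_pos hg1pos hp0) _
  have h0 : p * lam ^ (p - 1) = g1 := by
    rw [hlam, ← Real.rpow_mul (div_pos hg1pos hp0).le, one_div,
      inv_mul_cancel₀ (show p - 1 ≠ 0 from ne_of_lt (by linarith)), Real.rpow_one]
    field_simp
  set AE : ℝ := (-6 * f δ / δ ^ 2 + 6 * deriv f δ / δ - 2 * deriv (deriv f) δ) / 2 with hAE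
  set BE : ℝ := (6 * f δ / δ ^ 3 - 6 * deriv f δ / δ ^ 2 + 3 * deriv (deriv f) δ / δ) / 6 with hBE
  have hgd : g1 + 2 * AE * δ + 3 * BE * δ ^ 2 = p * δ ^ (p - 1) := by
    rw [hAE, hBE, hfδ, hd1, hd2, hg1v, e1, e2]
    field_simp
    ring
  have hpd : 2 * AE + 6 * BE * δ = p * ((p - 1) * δ ^ (p - 2)) := by
    rw [hAE, hBE, hfδ, hd1, hd2, e1, e2]
    field_simp
    ring
  intro w hw
  rw [hg]
  by_cases hwδ : w ≤ δ
  · simp only [if_pos hwδ]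
    exact core_lemma p δ lam g1 AE BE hp0 hp1 hδ hlam0 h0 hgd hpd w ⟨hw, hwδ⟩
  · simp only [if_neg hwδ, hf]
    have := aux_subadd hw hlam0.le hp0.le hp1.le (a := w) (b := lam)
    linarith
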